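/- Spectral filter difference bound on graphs: Let S̄_n, S_n ∈ ℝ^{n×n} be symmetric matrices with orthonormal eigenpairs (λ̄_i, v̄_i) and (λ_i, v_i). Let h : ℝ → ℝ be A₂-Lipschitz with |h| < 1 and h(λ) = 0 for |λ| < c. Suppose |λ̄_i − λ_i| ≤ ‖S̄_n − S_n‖ for all i (Weyl), and that for each i in the passband of S_n, ‖v̄_i − v_i‖ ≤ π‖S̄_n − S_n‖/(n δ_c) where δ_c is a lower bound on the normalized eigengaps. Then for every x ∈ ℝⁿ, ‖H(S̄_n)x − H(S_n)x‖ ≤ (A₂ + π n_c/δ_c) (‖S̄_n − S_n‖/n) ‖x‖, where H(S)x = Σ_i h(λ_i(S)/n)⟨x, v_i⟩v_i and n_c is the number of eigenvalues λ_i of S_n with |λ_i/n| ≥ c. -/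

import Mathlib

open Finset
open scoped RealInnerProductSpace

/-- For unit vectors `u, w`, the difference of the rank-one projections applied to
`x` is bounded by `‖u - w‖ * ‖x‖` (the operator norm of the projection difference is
`sin θ ≤ 2 sin (θ/2) = ‖u - w‖`). -/
lemma proj_diff_apply_norm_le {E : Type*} [NormedAddCommGroup E] [InnerProductSpace ℝ E]
    {u w : E} (hu : ‖u‖ = 1) (hw : ‖w‖ = 1) (x : E) :
    ‖⟪x, u⟫ • u - ⟪x, w⟫ • w‖ ≤ ‖u - w‖ * ‖x‖ := by
  set a := ⟪x, u⟫ with ha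
  set b := ⟪x, w⟫ with hb
  set t := ⟪u, w⟫ with htt
  have ht1 : |t| ≤ 1 := by
    have := abs_real_inner_le_norm u w
    rwa [hu, hw, one_mul] at this
  have hq : ‖a • u - b • w‖ ^ 2 = a ^ 2 + b ^ 2 - 2 * a * b * t := by
    rw [norm_sub_sq_real, norm_smul, norm_smul, real_inner_smul_left, real_inner_smul_right,
      hu, hw]
    simp [mul_pow, sq_abs]
    ring
  set q := a ^ 2 + b ^ 2 - 2 * a * b * t with hqd
  have hq0 : 0 ≤ q := by rw [← hq]; positivity
  -- Cauchy–Schwarz with the auxiliary vector z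
  set z := (a - b * t) • u + (b - a * t) • w with hz
  have hxz : ⟪x, z⟫ = q := by
    rw [hz, inner_add_right, real_inner_smul_right, real_inner_smul_right, ← ha, ← hb, hqd]
    ring
  have hzn : ‖z‖ ^ 2 = (1 - t ^ 2) * q := by
    rw [hz, norm_add_sq_real, norm_smul, norm_smul, real_inner_smul_left,
      real_inner_smul_right, hu, hw]
    simp [mul_pow, sq_abs, ← htt]
    rw [hqd]; ring
  have hcs : q ^ 2 ≤ ‖x‖ ^ 2 * ((1 - t ^ 2) * q) := by
    have h1 : |⟪x, z⟫| ≤ ‖x‖ * ‖z‖ := abs_real_inner_le_norm x z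
    have h2 : q ≤ ‖x‖ * ‖z‖ := by
      calc q = ⟪x, z⟫ := hxz.symm
        _ ≤ |⟪x, z⟫| := le_abs_self _
        _ ≤ ‖x‖ * ‖z‖ := h1
    calc q ^ 2 ≤ (‖x‖ * ‖z‖) ^ 2 := by
          have := mul_self_le_mul_self hq0 h2
          simpa [sq] using this
      _ = ‖x‖ ^ 2 * ‖z‖ ^ 2 := by ring
      _ = ‖x‖ ^ 2 * ((1 - t ^ 2) * q) := by rw [hzn]
  have hkey : q ≤ (1 - t ^ 2) * ‖x‖ ^ 2 := by
    obtain ⟨htl, htr⟩ := abs_le.mp ht1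
    rcases eq_or_lt_of_le hq0 with hq' | hq'
    · rw [← hq']
      exact mul_nonneg (by nlinarith) (sq_nonneg _)
    · nlinarith
  have huw : ‖u - w‖ ^ 2 = 2 - 2 * t := by
    rw [norm_sub_sq_real, hu, hw, ← htt]; ring
  have hfin : ‖a • u - b • w‖ ^ 2 ≤ (‖u - w‖ * ‖x‖) ^ 2 := by
    rw [hq, mul_pow, huw]
    have h1 : 1 - t ^ 2 ≤ 2 - 2 * t := by nlinarith [abs_le.mp ht1]
    calc a ^ 2 + b ^ 2 - 2 * a * b * t = q := rfl
      _ ≤ (1 - t ^ 2) * ‖x‖ ^ 2 := hkey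
      _ ≤ (2 - 2 * t) * ‖x‖ ^ 2 := by nlinarith [sq_nonneg ‖x‖]
  have h0 : (0:ℝ) ≤ ‖u - w‖ * ‖x‖ := by positivity
  nlinarith [norm_nonneg (a • u - b • w)]

/-- Spectral filter difference bound on graphs (finite-dimensional analogue of
graphon filter stability).  `S̄ₙ, Sₙ` are symmetric operators on `ℝⁿ` with
orthonormal eigenpairs `(λ̄ᵢ, v̄ᵢ)` and `(λᵢ, vᵢ)`; `h` is `A₂`-Lipschitz with
`|h| < 1` and `h(λ) = 0` for `|λ| < c`.  Under the Weyl bound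
`|λ̄ᵢ − λᵢ| ≤ ‖S̄ₙ − Sₙ‖` and the eigenvector perturbation bound
`‖v̄ᵢ − vᵢ‖ ≤ π‖S̄ₙ − Sₙ‖/(n δ_c)` on the passband, the filter outputs satisfy
`‖H(S̄ₙ)x − H(Sₙ)x‖ ≤ (A₂ + π n_c/δ_c)(‖S̄ₙ − Sₙ‖/n)‖x‖`, where `n_c` is the
number of eigenvalues `λᵢ` of `Sₙ` with `|λᵢ/n| ≥ c`. -/
theorem graph_filter_difference_bound
    (n : ℕ) (hn : 0 < n)
    (Sb Sn : EuclideanSpace ℝ (Fin n) →L[ℝ] EuclideanSpace ℝ (Fin n))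
    (hSb_sa : IsSelfAdjoint Sb) (hSn_sa : IsSelfAdjoint Sn)
    (lb lam : Fin n → ℝ)
    (vb v : Fin n → EuclideanSpace ℝ (Fin n))
    (hvb : Orthonormal ℝ vb) (hv : Orthonormal ℝ v)
    (heigb : ∀ i, Sb (vb i) = lb i • vb i)
    (heig : ∀ i, Sn (v i) = lam i • v i)
    (h : ℝ → ℝ) (A₂ c : ℝ) (hc : 0 < c)
    (hLip : ∀ x y, |h x - h y| ≤ A₂ * |x - y|)
    (hh_bd : ∀ x : ℝ, |h x| < 1)
    (hh_zero : ∀ x : ℝ, |x| < c → h x = 0)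
    (hWeyl : ∀ i, |lb i - lam i| ≤ ‖Sb - Sn‖)
    (δc : ℝ) (hδc : 0 < δc)
    (hDK : ∀ i, c ≤ |lam i / n| → ‖vb i - v i‖ ≤ Real.pi * ‖Sb - Sn‖ / (n * δc))
    (n_c : ℕ) (hn_c : n_c = (univ.filter fun i => c ≤ |lam i / n|).card) :
    ∀ x : EuclideanSpace ℝ (Fin n),
      ‖(∑ i, h (lb i / n) • (⟪x, vb i⟫ • vb i)) -
        ∑ i, h (lam i / n) • (⟪x, v i⟫ • v i)‖ ≤
      (A₂ + Real.pi * n_c / δc) * (‖Sb - Sn‖ / n) * ‖x‖ := by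
  intro x
  set K := ‖Sb - Sn‖ with hK
  have hK0 : 0 ≤ K := norm_nonneg _
  have hn' : (0:ℝ) < n := by exact_mod_cast hn
  have hA₂ : 0 ≤ A₂ := by
    have h1 := hLip 1 0
    have h2 : (0:ℝ) ≤ |h 1 - h 0| := abs_nonneg _
    simp only [sub_zero, abs_one, mul_one] at h1
    linarith
  -- decomposition
  set A : EuclideanSpace ℝ (Fin n) :=
    ∑ i, ((h (lb i / n) - h (lam i / n)) * ⟪x, vb i⟫) • vb i with hA
  set B : EuclideanSpace ℝ (Fin n) :=
    ∑ i, h (lam i / n) • ((⟪x, vb i⟫ • vb i) - (⟪x, v i⟫ • v i)) with hB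
  have hdecomp :
      (∑ i, h (lb i / n) • (⟪x, vb i⟫ • vb i)) -
        ∑ i, h (lam i / n) • (⟪x, v i⟫ • v i) = A + B := by
    rw [hA, hB, ← Finset.sum_add_distrib, ← Finset.sum_sub_distrib]
    refine Finset.sum_congr rfl fun i _ => ?_
    module
  -- bound on A
  have hAbd : ‖A‖ ≤ A₂ * K / n * ‖x‖ := by
    have hnorm : ‖A‖ ^ 2 = ∑ i, ((h (lb i / n) - h (lam i / n)) * ⟪x, vb i⟫) ^ 2 := by
      rw [hA, ← real_inner_self_eq_norm_sq, hvb.inner_sum]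
      simp [sq]
    have hle : ‖A‖ ^ 2 ≤ (A₂ * K / n * ‖x‖) ^ 2 := by
      rw [hnorm]
      calc ∑ i, ((h (lb i / n) - h (lam i / n)) * ⟪x, vb i⟫) ^ 2
          ≤ ∑ i, (A₂ * K / n) ^ 2 * ⟪x, vb i⟫ ^ 2 := by
            refine Finset.sum_le_sum fun i _ => ?_
            rw [mul_pow]
            have h1 : |h (lb i / n) - h (lam i / n)| ≤ A₂ * K / n := by
              calc |h (lb i / n) - h (lam i / n)| ≤ A₂ * |lb i / n - lam i / n| :=
                    hLip _ _
                _ = A₂ * (|lb i - lam i| / n) := by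
                    rw [← sub_div, abs_div, abs_of_pos hn']
                _ ≤ A₂ * (K / n) := by
                    have := hWeyl i
                    gcongr
                _ = A₂ * K / n := by ring
            have h2 : (h (lb i / n) - h (lam i / n)) ^ 2 ≤ (A₂ * K / n) ^ 2 := by
              rw [← sq_abs (h (lb i / n) - h (lam i / n))]
              have h0 : (0:ℝ) ≤ |h (lb i / n) - h (lam i / n)| := abs_nonneg _
              nlinarith
            nlinarith [sq_nonneg ⟪x, vb i⟫]
        _ = (A₂ * K / n) ^ 2 * ∑ i, ⟪x, vb i⟫ ^ 2 := by rw [Finset.mul_sum]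
        _ ≤ (A₂ * K / n) ^ 2 * ‖x‖ ^ 2 := by
            have hbessel : ∑ i, ⟪x, vb i⟫ ^ 2 ≤ ‖x‖ ^ 2 := by
              have hb2 := hvb.sum_inner_products_le (s := Finset.univ) x
              simp only [Real.norm_eq_abs, sq_abs] at hb2
              calc ∑ i, ⟪x, vb i⟫ ^ 2 = ∑ i, ⟪vb i, x⟫ ^ 2 :=
                    Finset.sum_congr rfl fun i _ => by rw [real_inner_comm]
                _ ≤ ‖x‖ ^ 2 := hb2
            have : (0:ℝ) ≤ (A₂ * K / n) ^ 2 := sq_nonneg _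
            nlinarith
        _ = (A₂ * K / n * ‖x‖) ^ 2 := by ring
    have h0 : (0:ℝ) ≤ A₂ * K / n * ‖x‖ := by positivity
    nlinarith [norm_nonneg A]
  -- bound on B
  have hBbd : ‖B‖ ≤ Real.pi * n_c / δc * (K / n) * ‖x‖ := by
    have hterm : ∀ i,
        ‖h (lam i / n) • ((⟪x, vb i⟫ • vb i) - (⟪x, v i⟫ • v i))‖ ≤
          (if c ≤ |lam i / n| then Real.pi * K / (n * δc) * ‖x‖ else 0) := by
      intro i
      by_cases hi : c ≤ |lam i / n|
      · simp only [hi, if_true]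
        rw [norm_smul]
        have h1 : ‖h (lam i / n)‖ ≤ 1 := le_of_lt (by simpa [Real.norm_eq_abs] using hh_bd (lam i / n))
        have h2 : ‖(⟪x, vb i⟫ • vb i) - (⟪x, v i⟫ • v i)‖ ≤ ‖vb i - v i‖ * ‖x‖ :=
          proj_diff_apply_norm_le (hvb.1 i) (hv.1 i) x
        have h3 : ‖vb i - v i‖ ≤ Real.pi * K / (n * δc) := hDK i hi
        calc ‖h (lam i / n)‖ * ‖(⟪x, vb i⟫ • vb i) - (⟪x, v i⟫ • v i)‖
            ≤ 1 * (‖vb i - v i‖ * ‖x‖) := by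
              apply mul_le_mul h1 h2 (norm_nonneg _) zero_le_one
          _ = ‖vb i - v i‖ * ‖x‖ := one_mul _
          _ ≤ Real.pi * K / (n * δc) * ‖x‖ := by gcongr
      · simp only [hi, if_false]
        rw [hh_zero _ (lt_of_not_ge hi)]
        simp
    calc ‖B‖ ≤ ∑ i, ‖h (lam i / n) • ((⟪x, vb i⟫ • vb i) - (⟪x, v i⟫ • v i))‖ :=
          norm_sum_le _ _
      _ ≤ ∑ i, (if c ≤ |lam i / n| then Real.pi * K / (n * δc) * ‖x‖ else 0) :=
          Finset.sum_le_sum fun i _ => hterm i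
      _ = (univ.filter fun i => c ≤ |lam i / n|).card • (Real.pi * K / (n * δc) * ‖x‖) := by
          rw [Finset.sum_ite, Finset.sum_const, Finset.sum_const_zero, add_zero]
      _ = n_c * (Real.pi * K / (n * δc) * ‖x‖) := by rw [hn_c, nsmul_eq_mul]
      _ = Real.pi * n_c / δc * (K / n) * ‖x‖ := by
          field_simp
  calc ‖(∑ i, h (lb i / n) • (⟪x, vb i⟫ • vb i)) -
        ∑ i, h (lam i / n) • (⟪x, v i⟫ • v i)‖ = ‖A + B‖ := by rw [hdecomp]
    _ ≤ ‖A‖ + ‖B‖ := norm_add_le _ _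
    _ ≤ A₂ * K / n * ‖x‖ + Real.pi * n_c / δc * (K / n) * ‖x‖ := add_le_add hAbd hBbd
    _ = (A₂ + Real.pi * n_c / δc) * (K / n) * ‖x‖ := by ring
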